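/- Let q ≥ 1 and let T be a finite metric space with |T| = k ≥ 4 even. Let z ∈ T be the center of a minimum-weight spanning star, so st_q(T) = Σ_{u∈T} d(z,u)^q. Then for any balanced bipartition T = L ∪ R with |L| = |R| = k/2, one has Σ_{ℓ∈L, r∈R} (d(z,ℓ)^q + d(z,r)^q) = (k/2) · st_q(T) ≤ 2 · cl_q(T) ≤ 2(2^q + 1) · bp_q(T) ≤ 2^(q+2) · bp_q(T). -/

import Mathlib

open Finset

private lemma rpow_triangle_bound {q : ℝ} (hq : 1 ≤ q) {a b c : ℝ}
    (ha : 0 ≤ a) (hb : 0 ≤ b) (hc : 0 ≤ c) (h : c ≤ a + b) :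
    c ^ q ≤ 2 ^ (q - 1) * (a ^ q + b ^ q) := by
  have h1 : c ^ q ≤ (a + b) ^ q :=
    Real.rpow_le_rpow hc h (by linarith)
  refine h1.trans ?_
  lift a to NNReal using ha
  lift b to NNReal using hb
  have := NNReal.rpow_add_le_mul_rpow_add_rpow a b hq
  have h2 := (NNReal.coe_le_coe.2 this)
  push_cast at h2
  convert h2 using 2

private lemma cross_bound {X : Type*} [MetricSpace X] [DecidableEq X]
    (q : ℝ) (hq : 1 ≤ q) (A B : Finset X) (hAB : A.card = B.card)
    (hm : 0 < B.card) :
    ∑ u ∈ A, ∑ v ∈ A, dist u v ^ q ≤ 2 ^ q * ∑ u ∈ A, ∑ r ∈ B, dist u r ^ q := by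
  set m : ℕ := B.card with hmdef
  have hmpos : (0:ℝ) < (m:ℝ) := by exact_mod_cast hm
  have key : ∀ u ∈ A, ∀ v ∈ A,
      (m:ℝ) * dist u v ^ q ≤ 2 ^ (q-1) * ∑ r ∈ B, (dist u r ^ q + dist r v ^ q) := by
    intro u _ v _
    have : (m:ℝ) * dist u v ^ q = ∑ _r ∈ B, dist u v ^ q := by
      rw [Finset.sum_const, nsmul_eq_mul]
    rw [this, Finset.mul_sum]
    refine Finset.sum_le_sum fun r _ => ?_
    exact rpow_triangle_bound hq dist_nonneg dist_nonneg dist_nonneg (dist_triangle u r v)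
  have step : (m:ℝ) * ∑ u ∈ A, ∑ v ∈ A, dist u v ^ q
      ≤ 2 ^ (q-1) * ∑ u ∈ A, ∑ v ∈ A, ∑ r ∈ B, (dist u r ^ q + dist r v ^ q) := by
    rw [Finset.mul_sum, Finset.mul_sum]
    refine Finset.sum_le_sum fun u hu => ?_
    rw [Finset.mul_sum, Finset.mul_sum]
    exact Finset.sum_le_sum fun v hv => key u hu v hv
  have hsum : ∑ u ∈ A, ∑ v ∈ A, ∑ r ∈ B, (dist u r ^ q + dist r v ^ q)
      = 2 * (m:ℝ) * ∑ u ∈ A, ∑ r ∈ B, dist u r ^ q := by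
    have hA : (A.card : ℝ) = (m:ℝ) := by exact_mod_cast congrArg (Nat.cast (R := ℝ)) hAB
    have e1 : ∀ u ∈ A, ∀ v ∈ A, ∑ r ∈ B, (dist u r ^ q + dist r v ^ q)
        = (∑ r ∈ B, dist u r ^ q) + ∑ r ∈ B, dist v r ^ q := by
      intro u _ v _
      rw [Finset.sum_add_distrib]
      congr 1
      exact Finset.sum_congr rfl fun r _ => by rw [dist_comm]
    calc ∑ u ∈ A, ∑ v ∈ A, ∑ r ∈ B, (dist u r ^ q + dist r v ^ q)
        = ∑ u ∈ A, ∑ v ∈ A, ((∑ r ∈ B, dist u r ^ q) + ∑ r ∈ B, dist v r ^ q) := by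
          refine Finset.sum_congr rfl fun u hu => Finset.sum_congr rfl fun v hv => e1 u hu v hv
      _ = ∑ u ∈ A, ((A.card : ℝ) * (∑ r ∈ B, dist u r ^ q) + ∑ v ∈ A, ∑ r ∈ B, dist v r ^ q) := by
          refine Finset.sum_congr rfl fun u _ => ?_
          rw [Finset.sum_add_distrib, Finset.sum_const, nsmul_eq_mul]
      _ = (A.card : ℝ) * (∑ u ∈ A, ∑ r ∈ B, dist u r ^ q)
            + (A.card : ℝ) * ∑ v ∈ A, ∑ r ∈ B, dist v r ^ q := by
          rw [Finset.sum_add_distrib, ← Finset.mul_sum, Finset.sum_const, nsmul_eq_mul]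
      _ = 2 * (m:ℝ) * ∑ u ∈ A, ∑ r ∈ B, dist u r ^ q := by rw [hA]; ring
  rw [hsum] at step
  have h2' : (2:ℝ) ^ (q-1) * 2 = 2 ^ q := by
    rw [Real.rpow_sub (by norm_num : (0:ℝ) < 2)]
    field_simp
    norm_num
  have final : (m:ℝ) * ∑ u ∈ A, ∑ v ∈ A, dist u v ^ q
      ≤ (m:ℝ) * (2 ^ q * ∑ u ∈ A, ∑ r ∈ B, dist u r ^ q) := by
    refine step.trans_eq ?_
    calc (2:ℝ) ^ (q-1) * (2 * (m:ℝ) * ∑ u ∈ A, ∑ r ∈ B, dist u r ^ q)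
        = ((2:ℝ) ^ (q-1) * 2) * ((m:ℝ) * ∑ u ∈ A, ∑ r ∈ B, dist u r ^ q) := by ring
      _ = (m:ℝ) * (2 ^ q * ∑ u ∈ A, ∑ r ∈ B, dist u r ^ q) := by rw [h2']; ring
  exact le_of_mul_le_mul_left final hmpos

theorem stmt_18 {X : Type*} [MetricSpace X] [Fintype X] [DecidableEq X]
    (q : ℝ) (hq : 1 ≤ q) (k : ℕ) (hk : Fintype.card X = k) (hk4 : 4 ≤ k)
    (hkeven : Even k)
    (z : X) (hz : ∀ z' : X, ∑ u : X, dist z u ^ q ≤ ∑ u : X, dist z' u ^ q)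
    (L R : Finset X) (hdisj : Disjoint L R) (hunion : L ∪ R = Finset.univ)
    (hL : L.card = k / 2) (hR : R.card = k / 2)
    (hne : ((Finset.univ : Finset X).powersetCard (k / 2)).Nonempty) :
    (∑ l ∈ L, ∑ r ∈ R, (dist z l ^ q + dist z r ^ q)
        = (k / 2 : ℝ) * ∑ u : X, dist z u ^ q) ∧
    ((k / 2 : ℝ) * ∑ u : X, dist z u ^ q
        ≤ 2 * ((1 / 2 : ℝ) * ∑ u : X, ∑ v : X, dist u v ^ q)) ∧
    (2 * ((1 / 2 : ℝ) * ∑ u : X, ∑ v : X, dist u v ^ q)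
        ≤ 2 * ((2:ℝ) ^ q + 1) *
          ((Finset.univ : Finset X).powersetCard (k / 2)).inf'
            hne (fun L' => ∑ l ∈ L', ∑ r ∈ Finset.univ \ L', dist l r ^ q)) ∧
    (2 * ((2:ℝ) ^ q + 1) *
          ((Finset.univ : Finset X).powersetCard (k / 2)).inf'
            hne (fun L' => ∑ l ∈ L', ∑ r ∈ Finset.univ \ L', dist l r ^ q)
        ≤ (2:ℝ) ^ (q + 2) *
          ((Finset.univ : Finset X).powersetCard (k / 2)).inf'
            hne (fun L' => ∑ l ∈ L', ∑ r ∈ Finset.univ \ L', dist l r ^ q)) := by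
  classical
  obtain ⟨m, hm⟩ := hkeven
  have hkm : k = 2 * m := by omega
  have hk2 : k / 2 = m := by omega
  have hm2 : 2 ≤ m := by omega
  have hcast : ((k : ℝ) / 2) = (m : ℝ) := by
    rw [hkm]; push_cast; ring
  have hnn : ∀ a b : X, (0:ℝ) ≤ dist a b ^ q := fun a b => Real.rpow_nonneg dist_nonneg q
  have hst0 : (0:ℝ) ≤ ∑ u : X, dist z u ^ q := Finset.sum_nonneg fun u _ => hnn z u
  -- part 1
  have hsplit : (∑ u ∈ L, dist z u ^ q) + ∑ u ∈ R, dist z u ^ q = ∑ u : X, dist z u ^ q := by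
    rw [← Finset.sum_union hdisj, hunion]
  have part1 : ∑ l ∈ L, ∑ r ∈ R, (dist z l ^ q + dist z r ^ q)
      = (k / 2 : ℝ) * ∑ u : X, dist z u ^ q := by
    have hLm : (L.card : ℝ) = (m : ℝ) := by rw [hL, hk2]
    have hRm : (R.card : ℝ) = (m : ℝ) := by rw [hR, hk2]
    calc ∑ l ∈ L, ∑ r ∈ R, (dist z l ^ q + dist z r ^ q)
        = ∑ l ∈ L, ((R.card : ℝ) * dist z l ^ q + ∑ r ∈ R, dist z r ^ q) := by
          refine Finset.sum_congr rfl fun l _ => ?_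
          rw [Finset.sum_add_distrib, Finset.sum_const, nsmul_eq_mul]
      _ = (R.card : ℝ) * (∑ l ∈ L, dist z l ^ q) + (L.card : ℝ) * ∑ r ∈ R, dist z r ^ q := by
          rw [Finset.sum_add_distrib, ← Finset.mul_sum, Finset.sum_const, nsmul_eq_mul]
      _ = (m : ℝ) * ((∑ l ∈ L, dist z l ^ q) + ∑ r ∈ R, dist z r ^ q) := by
          rw [hLm, hRm]; ring
      _ = (k / 2 : ℝ) * ∑ u : X, dist z u ^ q := by rw [hsplit, hcast]
  -- part 2
  have part2 : (k / 2 : ℝ) * ∑ u : X, dist z u ^ q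
      ≤ 2 * ((1 / 2 : ℝ) * ∑ u : X, ∑ v : X, dist u v ^ q) := by
    have hkst : (k:ℝ) * ∑ u : X, dist z u ^ q ≤ ∑ u : X, ∑ v : X, dist u v ^ q := by
      calc (k:ℝ) * ∑ u : X, dist z u ^ q = ∑ _u : X, ∑ v : X, dist z v ^ q := by
            rw [Finset.sum_const, Finset.card_univ, hk, nsmul_eq_mul]
        _ ≤ ∑ u : X, ∑ v : X, dist u v ^ q := Finset.sum_le_sum fun u _ => hz u
    have hk0 : (0:ℝ) ≤ (k:ℝ) := by positivity
    nlinarith [hst0]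
  -- part 3 setup
  set F : Finset X → ℝ := fun L' => ∑ l ∈ L', ∑ r ∈ Finset.univ \ L', dist l r ^ q with hF
  obtain ⟨L₀, hL₀mem, hL₀⟩ := Finset.exists_mem_eq_inf' hne F
  set R₀ : Finset X := Finset.univ \ L₀ with hR₀
  have hL₀card : L₀.card = m := by
    rw [← hk2]; exact (Finset.mem_powersetCard.1 hL₀mem).2
  have hR₀card : R₀.card = m := by
    rw [hR₀, Finset.card_sdiff_of_subset (Finset.subset_univ _), Finset.card_univ, hk, hL₀card]; omega
  set S : ℝ := ∑ l ∈ L₀, ∑ r ∈ R₀, dist l r ^ q with hSdef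
  have hS0 : 0 ≤ S := Finset.sum_nonneg fun u _ => Finset.sum_nonneg fun v _ => hnn u v
  have hinfS : ((Finset.univ : Finset X).powersetCard (k / 2)).inf' hne F = S := hL₀
  have hdisj0 : Disjoint L₀ R₀ := Finset.disjoint_sdiff
  have hun0 : L₀ ∪ R₀ = Finset.univ := Finset.union_sdiff_of_subset (Finset.subset_univ _)
  have hmpos : 0 < m := by omega
  -- within-part bounds
  have hWL : ∑ u ∈ L₀, ∑ v ∈ L₀, dist u v ^ q ≤ 2 ^ q * S :=
    cross_bound q hq L₀ R₀ (by rw [hL₀card, hR₀card]) (hR₀card ▸ hmpos)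
  have hScomm : ∑ u ∈ R₀, ∑ r ∈ L₀, dist u r ^ q = S := by
    rw [hSdef, Finset.sum_comm]
    exact Finset.sum_congr rfl fun u _ => Finset.sum_congr rfl fun v _ => by rw [dist_comm]
  have hWR : ∑ u ∈ R₀, ∑ v ∈ R₀, dist u v ^ q ≤ 2 ^ q * S := by
    have := cross_bound q hq R₀ L₀ (by rw [hL₀card, hR₀card]) (hL₀card ▸ hmpos)
    rwa [hScomm] at this
  have htotal : ∑ u : X, ∑ v : X, dist u v ^ q
      = (∑ u ∈ L₀, ∑ v ∈ L₀, dist u v ^ q) + (∑ u ∈ R₀, ∑ v ∈ R₀, dist u v ^ q) + 2 * S := by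
    have inner : ∀ u : X, ∑ v : X, dist u v ^ q
        = (∑ v ∈ L₀, dist u v ^ q) + ∑ v ∈ R₀, dist u v ^ q := by
      intro u; rw [← Finset.sum_union hdisj0, hun0]
    calc ∑ u : X, ∑ v : X, dist u v ^ q
        = ∑ u ∈ L₀ ∪ R₀, ((∑ v ∈ L₀, dist u v ^ q) + ∑ v ∈ R₀, dist u v ^ q) := by
          rw [hun0]; exact Finset.sum_congr rfl fun u _ => inner u
      _ = (∑ u ∈ L₀, ((∑ v ∈ L₀, dist u v ^ q) + ∑ v ∈ R₀, dist u v ^ q))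
            + ∑ u ∈ R₀, ((∑ v ∈ L₀, dist u v ^ q) + ∑ v ∈ R₀, dist u v ^ q) := by
          rw [Finset.sum_union hdisj0]
      _ = (∑ u ∈ L₀, ∑ v ∈ L₀, dist u v ^ q) + (∑ u ∈ R₀, ∑ v ∈ R₀, dist u v ^ q) + 2 * S := by
          rw [Finset.sum_add_distrib, Finset.sum_add_distrib, hScomm, ← hSdef]; ring
  have part3 : 2 * ((1 / 2 : ℝ) * ∑ u : X, ∑ v : X, dist u v ^ q)
      ≤ 2 * ((2:ℝ) ^ q + 1) *
        ((Finset.univ : Finset X).powersetCard (k / 2)).inf' hne F := by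
    rw [hinfS]
    have : ∑ u : X, ∑ v : X, dist u v ^ q ≤ 2 * ((2:ℝ) ^ q + 1) * S := by
      rw [htotal]; nlinarith [hWL, hWR]
    linarith
  -- part 4
  have h2q1 : (1:ℝ) ≤ 2 ^ q := Real.one_le_rpow (by norm_num) (by linarith)
  have part4 : 2 * ((2:ℝ) ^ q + 1) *
        ((Finset.univ : Finset X).powersetCard (k / 2)).inf' hne F
      ≤ (2:ℝ) ^ (q + 2) *
        ((Finset.univ : Finset X).powersetCard (k / 2)).inf' hne F := by
    rw [hinfS]
    have hcoef : 2 * ((2:ℝ) ^ q + 1) ≤ (2:ℝ) ^ (q + 2) := by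
      rw [Real.rpow_add (by norm_num : (0:ℝ) < 2)]
      have : (2:ℝ) ^ (2:ℝ) = 4 := by
        rw [show ((2:ℝ):ℝ) = ((2:ℕ):ℝ) by norm_num, Real.rpow_natCast]; norm_num
      rw [this]; nlinarith
    exact mul_le_mul_of_nonneg_right hcoef hS0
  exact ⟨part1, part2, part3, part4⟩
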